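/- Let n ≥ 1 and consider the uniform probability measure on the set Ω_n of all (2n)! orderings ω = (ω_1, …, ω_{2n}) of the 2n socks {1,…,n} × {0,1}. If (k_1, …, k_n) is a tuple of positive integers satisfying k_{i+1} ≥ k_i − 1 for all 1 ≤ i < n and k_n = 1, then the probability that K_j(x(ω)) = k_j for all j = 1, …, n equals 2^n · n! · (∏_{i=1}^n k_i) / (2n)!. -/

import Mathlib

/-- The path associated with an ordering `ω` of the `2n` socks `{1,…,n} × {0,1}`:
`x 0 = 0`, and the path steps up when a new sock type is drawn and down when the
drawn type has already occurred. -/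
def sockPath (n : ℕ) (ω : Fin (2 * n) → Fin n × Bool) : ℕ → ℤ
  | 0 => 0
  | m + 1 =>
    sockPath n ω m +
      if h : m < 2 * n then
        if ∃ i : Fin (2 * n), (i : ℕ) < m ∧ (ω i).1 = (ω ⟨m, h⟩).1 then -1 else 1
      else 0

/-- `Lseq x j` is `L_j(x)`: `L_0(x) = 0` and
`L_j(x) = min { i > L_{j-1}(x) : x (i+1) = x i - 1 }`. -/
noncomputable def Lseq (x : ℕ → ℤ) : ℕ → ℕ
  | 0 => 0
  | j + 1 => sInf {i : ℕ | Lseq x j < i ∧ x (i + 1) = x i - 1}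

/-- `Kseq x j` is `K_j(x) = x (L_j(x))`. -/
noncomputable def Kseq (x : ℕ → ℤ) (j : ℕ) : ℤ := x (Lseq x j)

/-- A Dyck path of length `2n`: a tuple `(x 1, …, x (2n))` of integers with `x 1 = 1`,
`|x (i+1) - x i| = 1` for `1 ≤ i < 2n`, `x i ≥ 0` for `1 ≤ i ≤ 2n - 1`, and `x (2n) = 0`. -/
def IsDyckPath (n : ℕ) (x : ℕ → ℤ) : Prop :=
  x 1 = 1 ∧ (∀ i, 1 ≤ i → i < 2 * n → |x (i + 1) - x i| = 1) ∧
    (∀ i, 1 ≤ i → i ≤ 2 * n - 1 → 0 ≤ x i) ∧ x (2 * n) = 0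

open Finset
open scoped Classical

namespace SockAux

/-- Position `p` is a "repeat": the sock type at `p` occurred earlier. -/
def RepAt {n m : ℕ} (f : Fin m → Fin n × Bool) (p : ℕ) : Prop :=
  ∃ i j : Fin m, (i : ℕ) < (j : ℕ) ∧ (j : ℕ) = p ∧ (f i).1 = (f j).1

def Good {n : ℕ} (S : Finset ℕ) {m : ℕ} (f : Fin m → Fin n × Bool) : Prop :=
  Function.Injective f ∧ ∀ p, p < m → (p ∈ S ↔ RepAt f p)

noncomputable def A (n : ℕ) (S : Finset ℕ) (m : ℕ) : Finset (Fin m → Fin n × Bool) :=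
  univ.filter (Good S)

def typeset {n m : ℕ} (f : Fin m → Fin n × Bool) : Finset (Fin n) :=
  image (fun i => (f i).1) univ

def typeset2 {n m : ℕ} (f : Fin m → Fin n × Bool) : Finset (Fin n) :=
  univ.filter (fun t => ∃ i j : Fin m, (i : ℕ) < (j : ℕ) ∧ (f i).1 = t ∧ (f j).1 = t)

/-- number of non-`S` positions below `m` -/
def uS (S : Finset ℕ) (m : ℕ) : ℕ := ((range m).filter (fun p => p ∉ S)).card

/-- number of `S` positions below `m` -/
def sS (S : Finset ℕ) (m : ℕ) : ℕ := ((range m).filter (fun p => p ∈ S)).card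

lemma uS_add_sS (S : Finset ℕ) (m : ℕ) : uS S m + sS S m = m := by
  rw [uS, sS, add_comm, Finset.card_filter_add_card_filter_not, Finset.card_range]

lemma uS_succ_mem (S : Finset ℕ) {m : ℕ} (h : m ∈ S) : uS S (m+1) = uS S m := by
  rw [uS, uS, Finset.range_add_one, Finset.filter_insert, if_neg (by simp [h])]

lemma sS_succ_mem (S : Finset ℕ) {m : ℕ} (h : m ∈ S) : sS S (m+1) = sS S m + 1 := by
  rw [sS, sS, Finset.range_add_one, Finset.filter_insert, if_pos h,
    Finset.card_insert_of_notMem (by simp)]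

lemma uS_succ_not_mem (S : Finset ℕ) {m : ℕ} (h : m ∉ S) : uS S (m+1) = uS S m + 1 := by
  rw [uS, uS, Finset.range_add_one, Finset.filter_insert, if_pos (by simp [h]),
    Finset.card_insert_of_notMem (by simp)]

lemma sS_succ_not_mem (S : Finset ℕ) {m : ℕ} (h : m ∉ S) : sS S (m+1) = sS S m := by
  rw [sS, sS, Finset.range_add_one, Finset.filter_insert, if_neg h]

lemma uS_mono (S : Finset ℕ) : Monotone (uS S) := by
  intro a b hab
  exact Finset.card_le_card (Finset.filter_subset_filter _
    (Finset.range_subset_range.2 hab))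

/-- a sock type occurs at most twice -/
lemma occ_le_two {n m : ℕ} {f : Fin m → Fin n × Bool} (hf : Function.Injective f)
    (t : Fin n) : (univ.filter (fun i : Fin m => (f i).1 = t)).card ≤ 2 := by
  have h1 : (univ.filter (fun v : Fin n × Bool => v.1 = t)).card = 2 := by
    have : (univ.filter (fun v : Fin n × Bool => v.1 = t)) = {(t, false), (t, true)} := by
      ext ⟨a, b⟩
      simp only [Finset.mem_filter, Finset.mem_univ, true_and, Finset.mem_insert,
        Finset.mem_singleton, Prod.mk.injEq]
      constructor
      · rintro rfl; cases b <;> simp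
      · rintro (⟨rfl, rfl⟩ | ⟨rfl, rfl⟩) <;> rfl
    rw [this]; simp
  rw [← h1]
  apply Finset.card_le_card_of_injOn f
  · intro i hi; simp only [Finset.coe_filter, Finset.mem_coe, Finset.mem_filter, Finset.mem_univ, true_and, Set.mem_setOf_eq] at hi ⊢; exact hi
  · exact fun a _ b _ h => hf h

lemma three_distinct_absurd {n m : ℕ} {f : Fin m → Fin n × Bool}
    (hf : Function.Injective f) {t : Fin n} {a b c : Fin m}
    (hab : a ≠ b) (hac : a ≠ c) (hbc : b ≠ c)
    (ha : (f a).1 = t) (hb : (f b).1 = t) (hc : (f c).1 = t) : False := by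
  have h2 := occ_le_two hf t
  have : 2 < (univ.filter (fun i : Fin m => (f i).1 = t)).card := by
    rw [Finset.two_lt_card]
    exact ⟨a, by simp [ha], b, by simp [hb], c, by simp [hc], hab, hac, hbc⟩
  omega

lemma typeset2_subset {n m : ℕ} (f : Fin m → Fin n × Bool) : typeset2 f ⊆ typeset f := by
  intro t ht
  simp only [typeset2, Finset.mem_filter, Finset.mem_univ, true_and] at ht
  obtain ⟨i, j, _, _, hj⟩ := ht
  exact Finset.mem_image.2 ⟨j, Finset.mem_univ _, hj⟩

lemma card_typeset {n m : ℕ} {S : Finset ℕ} {f : Fin m → Fin n × Bool} (hf : Good S f) :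
    (typeset f).card = (univ.filter (fun i : Fin m => (i : ℕ) ∉ S)).card := by
  symm
  apply Finset.card_bij (fun i _ => (f i).1)
  · intro i _
    exact Finset.mem_image.2 ⟨i, Finset.mem_univ _, rfl⟩
  · intro i₁ hi₁ i₂ hi₂ heq
    simp only [Finset.mem_filter, Finset.mem_univ, true_and] at hi₁ hi₂
    by_contra hne
    have hne' : (i₁ : ℕ) ≠ (i₂ : ℕ) := fun h => hne (Fin.ext h)
    rcases Nat.lt_or_ge (i₁ : ℕ) (i₂ : ℕ) with h | h
    · exact hi₂ ((hf.2 _ i₂.isLt).2 ⟨i₁, i₂, h, rfl, heq⟩)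
    · have h' : (i₂ : ℕ) < (i₁ : ℕ) := by omega
      exact hi₁ ((hf.2 _ i₁.isLt).2 ⟨i₂, i₁, h', rfl, heq.symm⟩)
  · intro t ht
    obtain ⟨i, _, hi⟩ := Finset.mem_image.1 ht
    have hne : (univ.filter (fun j : Fin m => (f j).1 = t)).Nonempty := ⟨i, by simp [hi]⟩
    set i₀ := (univ.filter (fun j : Fin m => (f j).1 = t)).min' hne with hi₀
    have hi₀mem : (f i₀).1 = t := by
      have := Finset.min'_mem _ hne
      simpa using this
    refine ⟨i₀, ?_, hi₀mem⟩
    simp only [Finset.mem_filter, Finset.mem_univ, true_and]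
    intro hS
    obtain ⟨a, b, hab, hb, htt⟩ := (hf.2 _ i₀.isLt).1 hS
    have hb' : b = i₀ := Fin.ext hb
    subst hb'
    have : i₀ ≤ a := Finset.min'_le _ a (by simp [htt.trans hi₀mem])
    exact absurd hab (by omega)

lemma card_typeset2 {n m : ℕ} {S : Finset ℕ} {f : Fin m → Fin n × Bool} (hf : Good S f) :
    (typeset2 f).card = (univ.filter (fun i : Fin m => (i : ℕ) ∈ S)).card := by
  symm
  apply Finset.card_bij (fun i _ => (f i).1)
  · intro i hi
    simp only [Finset.mem_filter, Finset.mem_univ, true_and] at hi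
    obtain ⟨a, b, hab, hb, htt⟩ := (hf.2 _ i.isLt).1 hi
    have hb' : b = i := Fin.ext hb
    rw [hb'] at htt hab
    simp only [typeset2, Finset.mem_filter, Finset.mem_univ, true_and]
    exact ⟨a, i, hab, htt, rfl⟩
  · intro i₁ hi₁ i₂ hi₂ heq
    simp only [Finset.mem_filter, Finset.mem_univ, true_and] at hi₁ hi₂
    by_contra hne
    obtain ⟨a, b, hab, hb, htt⟩ := (hf.2 _ i₁.isLt).1 hi₁
    have hbi : b = i₁ := Fin.ext hb
    rw [hbi] at htt hab
    have hai : a ≠ i₁ := fun h => by rw [h] at hab; omega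
    rcases eq_or_ne a i₂ with rfl | hane
    · -- a = i₂ < i₁; get another earlier occurrence for i₂ ∈ S
      obtain ⟨a', b', hab', hb', htt'⟩ := (hf.2 _ a.isLt).1 hi₂
      have hbi' : b' = a := Fin.ext hb'
      rw [hbi'] at htt' hab'
      have h1 : a' ≠ a := fun h => by rw [h] at hab'; omega
      have h2 : a' ≠ i₁ := fun h => by rw [h] at hab'; omega
      exact three_distinct_absurd hf.1 (t := (f i₁).1) h1 h2 hai
        (htt'.trans htt) htt rfl
    · exact three_distinct_absurd hf.1 (t := (f i₁).1) hane hai (fun h => hne h.symm)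
        htt heq.symm rfl
  · intro t ht
    simp only [typeset2, Finset.mem_filter, Finset.mem_univ, true_and] at ht
    obtain ⟨a, b, hab, ha, hb⟩ := ht
    refine ⟨b, ?_, hb⟩
    simp only [Finset.mem_filter, Finset.mem_univ, true_and]
    exact (hf.2 _ b.isLt).2 ⟨a, b, hab, rfl, ha.trans hb.symm⟩

noncomputable def choices {n : ℕ} (S : Finset ℕ) {m : ℕ} (f : Fin m → Fin n × Bool) :
    Finset (Fin n × Bool) :=
  univ.filter (fun v => v ∉ image f univ ∧ ((m ∈ S) ↔ v.1 ∈ typeset f))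

lemma card_filter_fin (m : ℕ) (P : ℕ → Prop) :
    (univ.filter (fun i : Fin m => P i.val)).card = ((range m).filter P).card := by
  refine Finset.card_bij (fun i _ => (i : ℕ)) ?_ ?_ ?_
  · intro i hi
    simp only [Finset.mem_filter, Finset.mem_univ, true_and] at hi
    simp [Finset.mem_range, i.isLt, hi]
  · intro a _ b _ h; exact Fin.ext h
  · intro p hp
    simp only [Finset.mem_filter, Finset.mem_range] at hp
    exact ⟨⟨p, hp.1⟩, by simp [hp.2], rfl⟩

lemma sock_cases {n : ℕ} (v w : Fin n × Bool) (h1 : v.1 = w.1) : v = w ∨ v = (w.1, !w.2) := by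
  obtain ⟨t, b⟩ := v
  obtain ⟨t', b'⟩ := w
  dsimp at h1
  subst h1
  cases b <;> cases b' <;> simp

lemma card_choices_up {n m : ℕ} (S : Finset ℕ) (f : Fin m → Fin n × Bool) (hm : m ∉ S) :
    (choices S f).card = 2 * (n - (typeset f).card) := by
  have h1 : choices S f = (univ \ typeset f) ×ˢ (univ : Finset Bool) := by
    ext v
    simp only [choices, Finset.mem_filter, Finset.mem_univ, true_and, Finset.mem_product,
      Finset.mem_sdiff, and_true]
    constructor
    · rintro ⟨hv, hiff⟩
      exact fun h => hm (hiff.2 h)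
    · intro hv
      refine ⟨?_, ⟨fun h => absurd h hm, fun h => absurd h hv⟩⟩
      intro hmem
      obtain ⟨i, _, hi⟩ := Finset.mem_image.1 hmem
      exact hv (Finset.mem_image.2 ⟨i, Finset.mem_univ _, congrArg Prod.fst hi⟩)
  rw [h1, Finset.card_product]
  simp [Finset.card_sdiff_of_subset (Finset.subset_univ _), mul_comm]

lemma card_choices_down {n m : ℕ} (S : Finset ℕ) (f : Fin m → Fin n × Bool)
    (hf : Function.Injective f) (hm : m ∈ S) :
    (choices S f).card = (typeset f).card - (typeset2 f).card := by
  have key : (choices S f).card = (typeset f \ typeset2 f).card := by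
    apply Finset.card_bij (fun v _ => v.1)
    · intro v hv
      simp only [choices, Finset.mem_filter, Finset.mem_univ, true_and] at hv
      obtain ⟨hvim, hiff⟩ := hv
      have hT : v.1 ∈ typeset f := hiff.1 hm
      refine Finset.mem_sdiff.2 ⟨hT, ?_⟩
      intro h2
      simp only [typeset2, Finset.mem_filter, Finset.mem_univ, true_and] at h2
      obtain ⟨a, b, hab, ha, hb⟩ := h2
      have hne : f a ≠ f b := fun h => by
        have := hf h; rw [this] at hab; omega
      -- v has fst = (f b).1 ; v equals f a or f b
      rcases sock_cases v (f b) hb.symm with rfl | hv2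
      · exact hvim (Finset.mem_image.2 ⟨b, Finset.mem_univ _, rfl⟩)
      · rcases sock_cases (f a) (f b) (ha.trans hb.symm) with h | h
        · exact hne h
        · have : v = f a := by rw [hv2, h]
          exact hvim (Finset.mem_image.2 ⟨a, Finset.mem_univ _, this.symm⟩)
    · intro v₁ hv₁ v₂ hv₂ heq
      simp only [choices, Finset.mem_filter, Finset.mem_univ, true_and] at hv₁ hv₂
      have hT : v₁.1 ∈ typeset f := hv₁.2.1 hm
      obtain ⟨i, _, hi⟩ := Finset.mem_image.1 hT
      by_contra hne
      -- v₁ ≠ v₂, same fst: they are the two socks of this type; f i is one of them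
      rcases sock_cases (f i) v₁ hi with h | h
      · exact hv₁.1 (Finset.mem_image.2 ⟨i, Finset.mem_univ _, h⟩)
      · rcases sock_cases (f i) v₂ (hi.trans heq) with h' | h'
        · exact hv₂.1 (Finset.mem_image.2 ⟨i, Finset.mem_univ _, h'⟩)
        · apply hne
          have h12 : ((v₁.1, !v₁.2) : Fin n × Bool) = (v₂.1, !v₂.2) := h.symm.trans h'
          have hb : v₁.2 = v₂.2 := by
            have := congrArg Prod.snd h12
            simp only [] at this
            exact Bool.not_inj this
          exact Prod.ext heq hb
    · intro t ht
      obtain ⟨hT, hT2⟩ := Finset.mem_sdiff.1 ht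
      obtain ⟨i, _, hi⟩ := Finset.mem_image.1 hT
      refine ⟨((f i).1, !(f i).2), ?_, by rw [hi]⟩
      simp only [choices, Finset.mem_filter, Finset.mem_univ, true_and]
      constructor
      · intro hmem
        obtain ⟨j, _, hj⟩ := Finset.mem_image.1 hmem
        have hji : (j : ℕ) ≠ (i : ℕ) := by
          intro h
          have hji' : j = i := Fin.ext h
          subst hji'
          have := congrArg Prod.snd hj
          simp at this
        have hj1 : (f j).1 = t := (congrArg Prod.fst hj).trans hi
        apply hT2
        simp only [typeset2, Finset.mem_filter, Finset.mem_univ, true_and]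
        rcases Nat.lt_or_ge (j : ℕ) (i : ℕ) with hlt | hge
        · exact ⟨j, i, hlt, hj1, hi⟩
        · exact ⟨i, j, by omega, hi, hj1⟩
      · exact ⟨fun _ => Finset.mem_image.2 ⟨i, Finset.mem_univ _, rfl⟩, fun _ => hm⟩
  rw [key, Finset.card_sdiff_of_subset (typeset2_subset f)]

lemma RepAt_snoc_lt {n m : ℕ} (f : Fin m → Fin n × Bool) (v : Fin n × Bool)
    {p : ℕ} (hp : p < m) : RepAt (Fin.snoc f v : Fin (m+1) → _) p ↔ RepAt f p := by
  constructor
  · rintro ⟨i, j, hij, hjp, ht⟩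
    have hjm : (j : ℕ) < m := hjp ▸ hp
    have him : (i : ℕ) < m := lt_trans hij hjm
    refine ⟨⟨i, him⟩, ⟨j, hjm⟩, hij, hjp, ?_⟩
    have hi' : i = Fin.castSucc ⟨(i : ℕ), him⟩ := Fin.ext rfl
    have hj' : j = Fin.castSucc ⟨(j : ℕ), hjm⟩ := Fin.ext rfl
    rw [hi', hj', Fin.snoc_castSucc, Fin.snoc_castSucc] at ht
    exact ht
  · rintro ⟨i, j, hij, hjp, ht⟩
    refine ⟨Fin.castSucc i, Fin.castSucc j, hij, hjp, ?_⟩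
    rw [Fin.snoc_castSucc, Fin.snoc_castSucc]; exact ht

lemma RepAt_snoc_last {n m : ℕ} (f : Fin m → Fin n × Bool) (v : Fin n × Bool) :
    RepAt (Fin.snoc f v : Fin (m+1) → _) m ↔ v.1 ∈ typeset f := by
  constructor
  · rintro ⟨i, j, hij, hjp, ht⟩
    have hj : j = Fin.last m := Fin.ext hjp
    subst hj
    have him : (i : ℕ) < m := by simpa using hij
    have hi' : i = Fin.castSucc ⟨(i : ℕ), him⟩ := Fin.ext rfl
    rw [Fin.snoc_last, hi', Fin.snoc_castSucc] at ht
    exact Finset.mem_image.2 ⟨⟨(i : ℕ), him⟩, Finset.mem_univ _, ht⟩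
  · intro hv
    obtain ⟨i, _, hi⟩ := Finset.mem_image.1 hv
    refine ⟨Fin.castSucc i, Fin.last m, i.isLt, rfl, ?_⟩
    rw [Fin.snoc_castSucc, Fin.snoc_last, hi]

lemma inj_snoc {n m : ℕ} {f : Fin m → Fin n × Bool} {v : Fin n × Bool}
    (hf : Function.Injective f) (hv : v ∉ image f univ) :
    Function.Injective (Fin.snoc f v : Fin (m+1) → _) := by
  intro a b hab
  rcases Fin.eq_castSucc_or_eq_last a with ⟨a', rfl⟩ | rfl <;>
    rcases Fin.eq_castSucc_or_eq_last b with ⟨b', rfl⟩ | rfl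
  · rw [Fin.snoc_castSucc, Fin.snoc_castSucc] at hab
    rw [hf hab]
  · rw [Fin.snoc_castSucc, Fin.snoc_last] at hab
    exact absurd (Finset.mem_image.2 ⟨a', Finset.mem_univ _, hab⟩) hv
  · rw [Fin.snoc_castSucc, Fin.snoc_last] at hab
    exact absurd (Finset.mem_image.2 ⟨b', Finset.mem_univ _, hab.symm⟩) hv
  · rfl

lemma card_A_succ (n : ℕ) (S : Finset ℕ) (m : ℕ) :
    (A n S (m+1)).card = ∑ f ∈ A n S m, (choices S f).card := by
  rw [← Finset.card_sigma]
  refine Finset.card_bij' (fun g _ => (⟨Fin.init g, g (Fin.last m)⟩ : Σ _ : Fin m → Fin n × Bool, Fin n × Bool))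
    (fun p _ => Fin.snoc p.1 p.2) ?_ ?_ ?_ ?_
  · -- forward maps into sigma
    intro g hg
    simp only [A, Finset.mem_filter, Finset.mem_univ, true_and] at hg
    obtain ⟨hinj, hcond⟩ := hg
    have hgs : g = Fin.snoc (Fin.init g) (g (Fin.last m)) := (Fin.snoc_init_self g).symm
    rw [Finset.mem_sigma]
    constructor
    · simp only [A, Finset.mem_filter, Finset.mem_univ, true_and]
      constructor
      · intro a b hab
        have : g (Fin.castSucc a) = g (Fin.castSucc b) := hab
        exact Fin.castSucc_injective m (hinj this)
      · intro p hp
        rw [hcond p (by omega)]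
        conv_lhs => rw [hgs]
        exact RepAt_snoc_lt _ _ hp
    · simp only [choices, Finset.mem_filter, Finset.mem_univ, true_and]
      constructor
      · intro hmem
        obtain ⟨i, _, hi⟩ := Finset.mem_image.1 hmem
        have : Fin.init g i = g (Fin.castSucc i) := rfl
        rw [this] at hi
        have := hinj hi
        exact absurd (congrArg Fin.val this) (by simp [Fin.ext_iff]; omega)
      · rw [hcond m (by omega)]
        constructor
        · intro h
          rw [hgs] at h
          exact (RepAt_snoc_last _ _).1 h
        · intro h
          rw [hgs]
          exact (RepAt_snoc_last _ _).2 h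
  · -- backward maps into A (m+1)
    rintro ⟨f, v⟩ hp
    rw [Finset.mem_sigma] at hp
    obtain ⟨hf, hv⟩ := hp
    simp only [A, Finset.mem_filter, Finset.mem_univ, true_and] at hf ⊢
    simp only [choices, Finset.mem_filter, Finset.mem_univ, true_and] at hv
    constructor
    · exact inj_snoc hf.1 hv.1
    · intro p hp
      rcases Nat.lt_or_ge p m with h | h
      · rw [RepAt_snoc_lt _ _ h]
        exact hf.2 p h
      · have hpm : p = m := by omega
        subst hpm
        rw [RepAt_snoc_last]
        exact hv.2
  · -- left inverse
    intro g _
    exact Fin.snoc_init_self g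
  · -- right inverse
    rintro ⟨f, v⟩ _
    simp only [Fin.init_snoc, Fin.snoc_last]

lemma card_typeset' {n m : ℕ} {S : Finset ℕ} {f : Fin m → Fin n × Bool} (hf : Good S f) :
    (typeset f).card = uS S m := by
  rw [card_typeset hf, uS]
  convert card_filter_fin m (fun p => p ∉ S) using 2 <;> (ext x; simp)

lemma card_typeset2' {n m : ℕ} {S : Finset ℕ} {f : Fin m → Fin n × Bool} (hf : Good S f) :
    (typeset2 f).card = sS S m := by
  rw [card_typeset2 hf, sS]
  convert card_filter_fin m (fun p => p ∈ S) using 2 <;> (ext x; simp)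

lemma card_A_succ' (n : ℕ) (S : Finset ℕ) (m : ℕ) :
    (A n S (m+1)).card = (A n S m).card *
      (if m ∈ S then uS S m - sS S m else 2 * (n - uS S m)) := by
  rw [card_A_succ, Finset.sum_congr rfl (g := fun _ =>
      (if m ∈ S then uS S m - sS S m else 2 * (n - uS S m))) ?_, Finset.sum_const, smul_eq_mul]
  intro f hf
  have hgood : Good S f := (Finset.mem_filter.1 hf).2
  by_cases hm : m ∈ S
  · rw [if_pos hm, card_choices_down S f hgood.1 hm, card_typeset' hgood, card_typeset2' hgood]
  · rw [if_neg hm, card_choices_up S f hm, card_typeset' hgood]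

lemma card_A_zero (n : ℕ) (S : Finset ℕ) : (A n S 0).card = 1 := by
  have h1 : A n S 0 = univ := by
    apply Finset.filter_true_of_mem
    intro f _
    exact ⟨fun a => a.elim0, fun p hp => absurd hp (Nat.not_lt_zero p)⟩
  rw [h1, Finset.card_univ]
  exact Fintype.card_eq_one_iff.2 ⟨(fun i => i.elim0), fun g => funext fun i => i.elim0⟩

lemma card_A_factorial (n : ℕ) (S : Finset ℕ) (N : ℕ)
    (hS : ∀ m, m < N → m ∉ S → uS S m < n) :
    ∀ m, m ≤ N → (A n S m).card * (n - uS S m).factorial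
      = 2 ^ (uS S m) * n.factorial * ∏ p ∈ (range m).filter (· ∈ S), (uS S p - sS S p) := by
  intro m
  induction m with
  | zero =>
    intro _
    simp [card_A_zero, uS]
  | succ m ih =>
    intro hm
    have ihm := ih (by omega)
    rw [card_A_succ' n S m]
    by_cases hmem : m ∈ S
    · rw [if_pos hmem, uS_succ_mem S hmem, Finset.range_add_one, Finset.filter_insert,
        if_pos hmem, Finset.prod_insert (by simp)]
      calc (A n S m).card * (uS S m - sS S m) * (n - uS S m).factorial
          = ((A n S m).card * (n - uS S m).factorial) * (uS S m - sS S m) := by ring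
        _ = (2 ^ uS S m * n.factorial * ∏ p ∈ (range m).filter (· ∈ S), (uS S p - sS S p))
              * (uS S m - sS S m) := by rw [ihm]
        _ = 2 ^ uS S m * n.factorial *
              ((uS S m - sS S m) * ∏ p ∈ (range m).filter (· ∈ S), (uS S p - sS S p)) := by ring
    · rw [if_neg hmem, uS_succ_not_mem S hmem, Finset.range_add_one, Finset.filter_insert,
        if_neg hmem]
      have hu : uS S m < n := hS m (by omega) hmem
      have hfac : (n - uS S m).factorial = (n - uS S m) * (n - (uS S m + 1)).factorial := by
        have h1 : n - (uS S m + 1) = (n - uS S m) - 1 := by omega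
        rw [h1]
        exact (Nat.mul_factorial_pred (by omega)).symm
      calc (A n S m).card * (2 * (n - uS S m)) * (n - (uS S m + 1)).factorial
          = ((A n S m).card * ((n - uS S m) * (n - (uS S m + 1)).factorial)) * 2 := by ring
        _ = ((A n S m).card * (n - uS S m).factorial) * 2 := by rw [hfac]
        _ = (2 ^ uS S m * n.factorial * ∏ p ∈ (range m).filter (· ∈ S), (uS S p - sS S p))
              * 2 := by rw [ihm]
        _ = 2 ^ (uS S m + 1) * n.factorial * ∏ p ∈ (range m).filter (· ∈ S),
              (uS S p - sS S p) := by ring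

noncomputable def Rset {n : ℕ} (ω : Fin (2 * n) → Fin n × Bool) : Finset ℕ :=
  (range (2 * n)).filter (RepAt ω)

lemma repAt_iff {n : ℕ} (ω : Fin (2 * n) → Fin n × Bool) {m : ℕ} (h : m < 2 * n) :
    RepAt ω m ↔ ∃ i : Fin (2 * n), (i : ℕ) < m ∧ (ω i).1 = (ω ⟨m, h⟩).1 := by
  constructor
  · rintro ⟨i, j, hij, hj, ht⟩
    have : j = ⟨m, h⟩ := Fin.ext hj
    subst this
    exact ⟨i, hij, ht⟩
  · rintro ⟨i, him, ht⟩
    exact ⟨i, ⟨m, h⟩, him, rfl, ht⟩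

lemma path_succ_lt {n : ℕ} (ω : Fin (2 * n) → Fin n × Bool) {m : ℕ} (h : m < 2 * n) :
    sockPath n ω (m + 1) = sockPath n ω m + (if RepAt ω m then -1 else 1) := by
  rw [sockPath, dif_pos h]
  congr 1
  by_cases hr : RepAt ω m
  · rw [if_pos hr, if_pos ((repAt_iff ω h).1 hr)]
  · rw [if_neg hr, if_neg (fun hex => hr ((repAt_iff ω h).2 hex))]

lemma path_succ_ge {n : ℕ} (ω : Fin (2 * n) → Fin n × Bool) {m : ℕ} (h : 2 * n ≤ m) :
    sockPath n ω (m + 1) = sockPath n ω m := by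
  rw [sockPath, dif_neg (by omega), add_zero]

lemma down_iff {n : ℕ} (ω : Fin (2 * n) → Fin n × Bool) (i : ℕ) :
    sockPath n ω (i + 1) = sockPath n ω i - 1 ↔ RepAt ω i := by
  rcases Nat.lt_or_ge i (2 * n) with h | h
  · rw [path_succ_lt ω h]
    by_cases hr : RepAt ω i
    · simp only [hr, if_true, iff_true]
      ring
    · simp only [hr, if_false, iff_false]
      intro habs
      omega
  · rw [path_succ_ge ω h]
    constructor
    · intro habs; omega
    · rintro ⟨a, j, _, hj, _⟩
      have := j.isLt
      omega

lemma path_height {n : ℕ} (ω : Fin (2 * n) → Fin n × Bool) :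
    ∀ m, m ≤ 2 * n →
      sockPath n ω m = (m : ℤ) - 2 * ((range m).filter (RepAt ω)).card := by
  intro m
  induction m with
  | zero => intro _; simp [sockPath]
  | succ m ih =>
    intro hm
    rw [path_succ_lt ω (by omega), ih (by omega), Finset.range_add_one, Finset.filter_insert]
    by_cases hr : RepAt ω m
    · rw [if_pos hr, if_pos hr, Finset.card_insert_of_notMem (by simp)]
      push_cast
      ring
    · rw [if_neg hr, if_neg hr]
      push_cast
      ring

lemma mem_Rset {n : ℕ} (ω : Fin (2 * n) → Fin n × Bool) (m : ℕ) :
    m ∈ Rset ω ↔ RepAt ω m := by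
  rw [Rset, Finset.mem_filter, Finset.mem_range]
  constructor
  · exact fun h => h.2
  · rintro h
    refine ⟨?_, h⟩
    obtain ⟨i, j, _, hj, _⟩ := h
    have := j.isLt
    omega

lemma card_Rset {n : ℕ} (ω : Fin (2 * n) ≃ Fin n × Bool) :
    (Rset ⇑ω).card = n := by
  have key : (Rset ⇑ω).card = (univ : Finset (Fin n)).card := by
    refine Finset.card_bij'
      (i := fun m hm => (ω ⟨m, by
        have := (Finset.mem_filter.1 hm).1
        exact Finset.mem_range.1 this⟩).1)
      (j := fun t _ => max ((ω.symm (t, false)) : ℕ) ((ω.symm (t, true)) : ℕ))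
      ?_ ?_ ?_ ?_
    · intro m hm
      exact Finset.mem_univ _
    · intro t _
      set a := ω.symm (t, false) with ha
      set b := ω.symm (t, true) with hb
      have hab : a ≠ b := by
        rw [ha, hb]
        intro h
        have h2 := ω.symm.injective h
        simp at h2
      have hab' : (a : ℕ) ≠ (b : ℕ) := fun h => hab (Fin.ext h)
      have hwa : (ω a).1 = t := by rw [ha]; simp
      have hwb : (ω b).1 = t := by rw [hb]; simp
      rw [mem_Rset]
      rcases Nat.lt_or_ge (a : ℕ) (b : ℕ) with h | h
      · have hmax : max (a : ℕ) (b : ℕ) = (b : ℕ) := by omega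
        rw [hmax]
        exact ⟨a, b, h, rfl, hwa.trans hwb.symm⟩
      · have hlt : (b : ℕ) < (a : ℕ) := by omega
        have hmax : max (a : ℕ) (b : ℕ) = (a : ℕ) := by omega
        rw [hmax]
        exact ⟨b, a, hlt, rfl, hwb.trans hwa.symm⟩
    · -- left inverse
      intro m hm
      have hm2 : m < 2 * n := Finset.mem_range.1 (Finset.mem_filter.1 hm).1
      have hr : RepAt (⇑ω) m := (Finset.mem_filter.1 hm).2
      obtain ⟨i, j, hij, hj, ht⟩ := hr
      have hjc : j = ⟨m, hm2⟩ := Fin.ext hj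
      subst hjc
      set c : Fin (2 * n) := ⟨m, hm2⟩ with hc
      set t := (ω c).1 with htdef
      have hic : i ≠ c := by
        intro h; rw [h] at hij; omega
      have hsnd : (ω i).2 ≠ (ω c).2 := by
        intro h
        exact hic (ω.injective (Prod.ext ht h))
      show max ((ω.symm (t, false)) : ℕ) ((ω.symm (t, true)) : ℕ) = m
      cases hb : (ω c).2
      · have h1 : ω c = (t, false) := Prod.ext rfl hb
        have h2 : ω i = (t, true) := by
          apply Prod.ext
          · exact ht
          · rw [hb] at hsnd
            cases h : (ω i).2
            · exact absurd h hsnd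
            · rfl
        have e1 : ω.symm (t, false) = c := by rw [← h1]; simp
        have e2 : ω.symm (t, true) = i := by rw [← h2]; simp
        rw [e1, e2]
        have : (i : ℕ) < m := hij
        simp only [hc]
        omega
      · have h1 : ω c = (t, true) := Prod.ext rfl hb
        have h2 : ω i = (t, false) := by
          apply Prod.ext
          · exact ht
          · rw [hb] at hsnd
            cases h : (ω i).2
            · rfl
            · exact absurd h hsnd
        have e1 : ω.symm (t, true) = c := by rw [← h1]; simp
        have e2 : ω.symm (t, false) = i := by rw [← h2]; simp
        rw [e1, e2]
        have : (i : ℕ) < m := hij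
        simp only [hc]
        omega
    · -- right inverse
      intro t _
      rcases max_choice ((ω.symm (t, false)) : ℕ) ((ω.symm (t, true)) : ℕ) with h | h
      · have hlt : max ((ω.symm (t, false)) : ℕ) ((ω.symm (t, true)) : ℕ) < 2 * n := by
          rw [h]; exact (ω.symm (t, false)).isLt
        show (ω ⟨max ((ω.symm (t, false)) : ℕ) ((ω.symm (t, true)) : ℕ), hlt⟩).1 = t
        rw [show (⟨max ((ω.symm (t, false)) : ℕ) ((ω.symm (t, true)) : ℕ), hlt⟩ : Fin (2 * n))
            = ω.symm (t, false) from Fin.ext h]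
        simp
      · have hlt : max ((ω.symm (t, false)) : ℕ) ((ω.symm (t, true)) : ℕ) < 2 * n := by
          rw [h]; exact (ω.symm (t, true)).isLt
        show (ω ⟨max ((ω.symm (t, false)) : ℕ) ((ω.symm (t, true)) : ℕ), hlt⟩).1 = t
        rw [show (⟨max ((ω.symm (t, false)) : ℕ) ((ω.symm (t, true)) : ℕ), hlt⟩ : Fin (2 * n))
            = ω.symm (t, true) from Fin.ext h]
        simp

  simpa using key

lemma enum_spec (R : Finset ℕ) (h0 : 0 ∉ R) (e : ℕ → ℕ) (he0 : e 0 = 0)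
    (heS : ∀ j, e (j + 1) = sInf {i : ℕ | e j < i ∧ i ∈ R}) :
    ∀ j, j ≤ R.card →
      (R.filter (· ≤ e j)).card = j ∧ (1 ≤ j → e j ∈ R ∧ e (j - 1) < e j) := by
  intro j
  induction j with
  | zero =>
    intro _
    refine ⟨?_, by omega⟩
    rw [he0, Finset.card_eq_zero, Finset.filter_eq_empty_iff]
    intro r hr
    intro hle
    exact h0 (by simpa [Nat.le_zero.1 hle] using hr)
  | succ j ih =>
    intro hj
    obtain ⟨hcard, -⟩ := ih (by omega)
    have hex : ∃ r ∈ R, e j < r := by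
      by_contra h'
      push_neg at h'
      have heq : R.filter (· ≤ e j) = R := by
        apply Finset.filter_true_of_mem
        intro r hr
        simpa using h' r hr
      rw [heq] at hcard
      omega
    have hTne : {i : ℕ | e j < i ∧ i ∈ R}.Nonempty := by
      obtain ⟨r, hr, hlt⟩ := hex
      exact ⟨r, hlt, hr⟩
    have hmem : e (j + 1) ∈ {i : ℕ | e j < i ∧ i ∈ R} := by
      rw [heS j]; exact Nat.sInf_mem hTne
    obtain ⟨hgt, hR⟩ := hmem
    have hmin : ∀ i, e j < i → i ∈ R → e (j + 1) ≤ i := by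
      intro i h1 h2
      rw [heS j]
      exact Nat.sInf_le ⟨h1, h2⟩
    have hins : R.filter (· ≤ e (j + 1)) = insert (e (j + 1)) (R.filter (· ≤ e j)) := by
      ext r
      simp only [Finset.mem_filter, Finset.mem_insert, decide_eq_true_eq]
      constructor
      · rintro ⟨hr, hle⟩
        rcases Nat.lt_or_ge (e j) r with h | h
        · exact Or.inl (le_antisymm hle (hmin r h hr))
        · exact Or.inr ⟨hr, h⟩
      · rintro (rfl | ⟨hr, hle⟩)
        · exact ⟨hR, le_rfl⟩
        · exact ⟨hr, hle.trans (le_of_lt hgt)⟩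
    refine ⟨?_, fun _ => ⟨hR, by simpa using hgt⟩⟩
    rw [hins, Finset.card_insert_of_notMem (by
      simp only [Finset.mem_filter, decide_eq_true_eq]
      rintro ⟨-, hle⟩
      omega), hcard]

section Dseq

variable (n : ℕ) (k : ℕ → ℕ)

def D (j : ℕ) : ℕ := k j + 2 * (j - 1)

variable {n k}

variable (hn : 1 ≤ n)
    (hpos : ∀ i, 1 ≤ i → i ≤ n → 0 < k i)
    (hcond : ∀ i, 1 ≤ i → i < n → k i ≤ k (i + 1) + 1)
    (hlast : k n = 1)

include hcond in
lemma D_strict : ∀ a b, 1 ≤ a → a < b → b ≤ n → D k a < D k b := by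
  have step : ∀ j, 1 ≤ j → j < n → D k j < D k (j + 1) := by
    intro j h1 h2
    have := hcond j h1 h2
    simp only [D]
    omega
  intro a b ha hab hbn
  induction b with
  | zero => omega
  | succ b ihb =>
    rcases Nat.lt_or_ge a b with h | h
    · have h1 := ihb h (by omega)
      have h2 := step b (by omega) (by omega)
      omega
    · have hba : b = a := by omega
      subst hba
      exact step b ha (by omega)

include hcond hlast in
lemma D_le : ∀ j, 1 ≤ j → j ≤ n → D k j ≤ 2 * n - 1 := by
  intro j h1 h2
  have hDn : D k n = 2 * n - 1 := by
    simp only [D, hlast]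
    omega
  rcases Nat.lt_or_ge j n with h | h
  · have := D_strict hcond j n h1 h le_rfl
    omega
  · have : j = n := by omega
    subst this
    omega

end Dseq

lemma Lseq_eq_sInf {n : ℕ} (ω : Fin (2 * n) → Fin n × Bool) (j : ℕ) :
    Lseq (sockPath n ω) (j + 1) =
      sInf {i : ℕ | Lseq (sockPath n ω) j < i ∧ i ∈ Rset ω} := by
  rw [Lseq]
  congr 1
  ext i
  simp only [Set.mem_setOf_eq, down_iff, mem_Rset]

section SFacts

variable {n : ℕ} {k : ℕ → ℕ}

variable (hn : 1 ≤ n)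
    (hpos : ∀ i, 1 ≤ i → i ≤ n → 0 < k i)
    (hcond : ∀ i, 1 ≤ i → i < n → k i ≤ k (i + 1) + 1)
    (hlast : k n = 1)

include hcond in
lemma D_injOn : Set.InjOn (D k) (Icc 1 n) := by
  intro a ha b hb hab
  simp only [coe_Icc, Set.mem_Icc] at ha hb
  by_contra hne
  rcases Nat.lt_or_ge a b with h | h
  · have := D_strict hcond a b ha.1 h hb.2
    omega
  · have hba : b < a := by omega
    have := D_strict hcond b a hb.1 hba ha.2
    omega

include hcond in
lemma card_filter_le_D {j : ℕ} (h1 : 1 ≤ j) (h2 : j ≤ n) :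
    (((Icc 1 n).image (D k)).filter (· ≤ D k j)).card = j := by
  have hset : ((Icc 1 n).image (D k)).filter (· ≤ D k j) = (Icc 1 j).image (D k) := by
    ext p
    simp only [Finset.mem_filter, Finset.mem_image, Finset.mem_Icc]
    constructor
    · rintro ⟨⟨a, ⟨ha1, ha2⟩, rfl⟩, hle⟩
      refine ⟨a, ⟨ha1, ?_⟩, rfl⟩
      by_contra hgt
      have := D_strict hcond j a h1 (by omega) ha2
      omega
    · rintro ⟨a, ⟨ha1, ha2⟩, rfl⟩
      refine ⟨⟨a, ⟨ha1, by omega⟩, rfl⟩, ?_⟩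
      rcases Nat.lt_or_ge a j with h | h
      · exact (D_strict hcond a j ha1 h h2).le
      · have : a = j := by omega
        subst this
        exact le_rfl
  rw [hset, Finset.card_image_of_injOn (fun a ha b hb hab => by
    apply D_injOn hcond _ _ hab <;>
      · simp only [coe_Icc, Set.mem_Icc] at *
        constructor <;> omega), Nat.card_Icc]
  omega

include hcond in
lemma card_filter_lt_D {j : ℕ} (h1 : 1 ≤ j) (h2 : j ≤ n) :
    (((Icc 1 n).image (D k)).filter (· < D k j)).card = j - 1 := by
  have hmem : D k j ∈ ((Icc 1 n).image (D k)) :=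
    Finset.mem_image.2 ⟨j, Finset.mem_Icc.2 ⟨h1, h2⟩, rfl⟩
  have hins : ((Icc 1 n).image (D k)).filter (· ≤ D k j) =
      insert (D k j) (((Icc 1 n).image (D k)).filter (· < D k j)) := by
    ext p
    simp only [Finset.mem_filter, Finset.mem_insert]
    constructor
    · rintro ⟨hp, hle⟩
      rcases Nat.lt_or_ge p (D k j) with h | h
      · exact Or.inr ⟨hp, h⟩
      · exact Or.inl (by omega)
    · rintro (rfl | ⟨hp, hlt⟩)
      · exact ⟨hmem, le_rfl⟩
      · exact ⟨hp, hlt.le⟩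
  have := card_filter_le_D hcond h1 h2
  rw [hins, Finset.card_insert_of_notMem (by
    simp only [Finset.mem_filter]
    rintro ⟨-, h⟩
    omega)] at this
  omega

include hn hpos hcond hlast in
lemma Kseq_iff (ω : Fin (2 * n) ≃ Fin n × Bool) :
    (∀ j, 1 ≤ j → j ≤ n → Kseq (sockPath n ⇑ω) j = (k j : ℤ)) ↔
      Rset ⇑ω = (Icc 1 n).image (D k) := by
  set x := sockPath n ⇑ω with hx
  set R := Rset ⇑ω with hRdef
  set S := (Icc 1 n).image (D k) with hSdef
  have hcardR : R.card = n := card_Rset ω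
  have h0R : (0 : ℕ) ∉ R := by
    rw [hRdef, mem_Rset]
    rintro ⟨i, j', hij, hj', -⟩
    omega
  have E := enum_spec R h0R (Lseq x) rfl (fun j => Lseq_eq_sInf ⇑ω j)
  have hERange : ∀ j, 1 ≤ j → j ≤ n → Lseq x j ∈ R ∧ (R.filter (· ≤ Lseq x j)).card = j := by
    intro j h1 h2
    obtain ⟨hc, hm⟩ := E j (by omega)
    exact ⟨(hm h1).1, hc⟩
  have hlt_card : ∀ j, 1 ≤ j → j ≤ n → (R.filter (· < Lseq x j)).card = j - 1 := by
    intro j h1 h2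
    obtain ⟨hmem, hc⟩ := hERange j h1 h2
    have hins : R.filter (· ≤ Lseq x j) = insert (Lseq x j) (R.filter (· < Lseq x j)) := by
      ext p
      simp only [Finset.mem_filter, Finset.mem_insert]
      constructor
      · rintro ⟨hp, hle⟩
        rcases Nat.lt_or_ge p (Lseq x j) with h | h
        · exact Or.inr ⟨hp, h⟩
        · exact Or.inl (by omega)
      · rintro (rfl | ⟨hp, hlt⟩)
        · exact ⟨hmem, le_rfl⟩
        · exact ⟨hp, hlt.le⟩
    rw [hins, Finset.card_insert_of_notMem (by
      simp only [Finset.mem_filter]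
      rintro ⟨-, h⟩
      omega)] at hc
    omega
  have hKval : ∀ j, 1 ≤ j → j ≤ n →
      Kseq x j = (Lseq x j : ℤ) - 2 * ((j - 1 : ℕ) : ℤ) := by
    intro j h1 h2
    obtain ⟨hmem, -⟩ := hERange j h1 h2
    have hlt2n : Lseq x j < 2 * n := by
      have := (Finset.mem_filter.1 hmem).1
      exact Finset.mem_range.1 this
    have hKs : Kseq x j = x (Lseq x j) := rfl
    rw [hKs, hx, path_height ⇑ω (Lseq x j) (by omega)]
    have hfeq : (range (Lseq x j)).filter (RepAt ⇑ω) = R.filter (· < Lseq x j) := by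
      ext p
      simp only [Finset.mem_filter, Finset.mem_range, hRdef, Rset]
      constructor
      · rintro ⟨hp, hr⟩
        exact ⟨⟨by omega, hr⟩, hp⟩
      · rintro ⟨⟨-, hr⟩, hp⟩
        exact ⟨hp, hr⟩
    rw [hfeq, hlt_card j h1 h2]
  constructor
  · intro H
    have hej : ∀ j, 1 ≤ j → j ≤ n → Lseq x j = D k j := by
      intro j h1 h2
      have h3 := H j h1 h2
      rw [hKval j h1 h2] at h3
      have h4 : (Lseq x j : ℤ) = (k j : ℤ) + 2 * ((j - 1 : ℕ) : ℤ) := by linarith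
      have h5 : Lseq x j = k j + 2 * (j - 1) := by exact_mod_cast h4
      rw [h5]; rfl
    have hstrict : ∀ a b, a < b → b ≤ n → Lseq x a < Lseq x b := by
      intro a b hab hbn
      induction b with
      | zero => omega
      | succ b ihb =>
        have hstep : Lseq x b < Lseq x (b + 1) := by
          have := (E (b + 1) (by omega)).2 (by omega)
          simpa using this.2
        rcases Nat.lt_or_ge a b with h | h
        · exact lt_trans (ihb h (by omega)) hstep
        · have : a = b := by omega
          subst this
          exact hstep
    have hinj : Set.InjOn (Lseq x) (Icc 1 n) := by
      intro a ha b hb hab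
      simp only [coe_Icc, Set.mem_Icc] at ha hb
      by_contra hne
      rcases Nat.lt_or_ge a b with h | h
      · have := hstrict a b h hb.2; omega
      · have := hstrict b a (by omega) ha.2; omega
    have hsub : (Icc 1 n).image (Lseq x) ⊆ R := by
      intro p hp
      obtain ⟨j, hj, rfl⟩ := Finset.mem_image.1 hp
      rw [Finset.mem_Icc] at hj
      exact (hERange j hj.1 hj.2).1
    have hcardimg : ((Icc 1 n).image (Lseq x)).card = n := by
      rw [Finset.card_image_of_injOn hinj, Nat.card_Icc]
      omega
    have himgR : (Icc 1 n).image (Lseq x) = R :=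
      Finset.eq_of_subset_of_card_le hsub (by omega)
    rw [← himgR, hSdef]
    apply Finset.image_congr
    intro j hj
    simp only [coe_Icc, Set.mem_Icc] at hj
    exact hej j hj.1 hj.2
  · intro hR j h1 h2
    obtain ⟨hmem, hcle⟩ := hERange j h1 h2
    rw [hR] at hmem
    obtain ⟨j', hj', hDj'⟩ := Finset.mem_image.1 hmem
    rw [Finset.mem_Icc] at hj'
    have hcle' : (S.filter (· ≤ D k j')).card = j' := card_filter_le_D hcond hj'.1 hj'.2
    rw [hR, ← hDj'] at hcle
    have : j = j' := by rw [← hcle, hcle']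
    subst this
    rw [hKval j h1 h2, ← hDj', D]
    push_cast [Nat.sub_one]
    have : (1 : ℕ) ≤ j := h1
    omega

end SFacts

section Final

variable {n : ℕ} {k : ℕ → ℕ}

variable (hn : 1 ≤ n)
    (hpos : ∀ i, 1 ≤ i → i ≤ n → 0 < k i)
    (hcond : ∀ i, 1 ≤ i → i < n → k i ≤ k (i + 1) + 1)
    (hlast : k n = 1)

include hn hpos hcond hlast in
lemma S_subset_range : (Icc 1 n).image (D k) ⊆ range (2 * n) := by
  intro p hp
  obtain ⟨j, hj, rfl⟩ := Finset.mem_image.1 hp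
  rw [Finset.mem_Icc] at hj
  have := D_le hcond hlast j hj.1 hj.2
  rw [Finset.mem_range]
  omega

include hcond in
lemma S_card : ((Icc 1 n).image (D k)).card = n := by
  rw [Finset.card_image_of_injOn (D_injOn hcond), Nat.card_Icc]
  omega

include hn hpos hcond hlast in
lemma filter_range_S : (range (2 * n)).filter (· ∈ (Icc 1 n).image (D k))
    = (Icc 1 n).image (D k) := by
  ext p
  simp only [Finset.mem_filter]
  exact ⟨fun h => h.2, fun h => ⟨S_subset_range hn hpos hcond hlast h, h⟩⟩

include hn hpos hcond hlast in
lemma sS_full : sS ((Icc 1 n).image (D k)) (2 * n) = n := by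
  have h1 : (range (2 * n)).filter (fun p => p ∈ (Icc 1 n).image (D k))
      = (Icc 1 n).image (D k) := filter_range_S hn hpos hcond hlast
  rw [sS, h1, S_card hcond]

include hn hpos hcond hlast in
lemma uS_full : uS ((Icc 1 n).image (D k)) (2 * n) = n := by
  have h1 := uS_add_sS ((Icc 1 n).image (D k)) (2 * n)
  have h2 := sS_full hn hpos hcond hlast
  omega

include hn hpos hcond hlast in
lemma S_valid : ∀ m, m < 2 * n → m ∉ (Icc 1 n).image (D k) →
    uS ((Icc 1 n).image (D k)) m < n := by
  intro m h1 h2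
  have h3 := uS_succ_not_mem ((Icc 1 n).image (D k)) h2
  have h4 : uS ((Icc 1 n).image (D k)) (m + 1) ≤ uS ((Icc 1 n).image (D k)) (2 * n) :=
    uS_mono _ (by omega)
  have h5 := uS_full hn hpos hcond hlast
  omega

include hcond in
lemma sS_at_D {j : ℕ} (h1 : 1 ≤ j) (h2 : j ≤ n) :
    sS ((Icc 1 n).image (D k)) (D k j) = j - 1 := by
  have heq : (range (D k j)).filter (fun p => p ∈ (Icc 1 n).image (D k))
      = ((Icc 1 n).image (D k)).filter (· < D k j) := by
    ext p
    simp only [Finset.mem_filter, Finset.mem_range]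
    exact ⟨fun h => ⟨h.2, h.1⟩, fun h => ⟨h.2, h.1⟩⟩
  rw [sS, heq, card_filter_lt_D hcond h1 h2]

include hcond in
lemma uS_at_D {j : ℕ} (h1 : 1 ≤ j) (h2 : j ≤ n) :
    uS ((Icc 1 n).image (D k)) (D k j) = k j + (j - 1) := by
  have h3 := uS_add_sS ((Icc 1 n).image (D k)) (D k j)
  have h4 := sS_at_D hcond h1 h2
  have h5 : D k j = k j + 2 * (j - 1) := rfl
  omega

include hn hpos hcond hlast in
lemma prod_S : ∏ p ∈ (range (2 * n)).filter (· ∈ (Icc 1 n).image (D k)),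
    (uS ((Icc 1 n).image (D k)) p - sS ((Icc 1 n).image (D k)) p)
    = ∏ i ∈ Icc 1 n, k i := by
  rw [filter_range_S hn hpos hcond hlast]
  rw [Finset.prod_image (fun a ha b hb hab => D_injOn hcond (by simpa using ha)
      (by simpa using hb) hab)]
  apply Finset.prod_congr rfl
  intro j hj
  rw [Finset.mem_Icc] at hj
  rw [uS_at_D hcond hj.1 hj.2, sS_at_D hcond hj.1 hj.2]
  omega

include hn hpos hcond hlast in
lemma card_equiv_filter :
    (univ.filter fun ω : Fin (2 * n) ≃ Fin n × Bool => Rset ⇑ω = (Icc 1 n).image (D k)).card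
      = (A n ((Icc 1 n).image (D k)) (2 * n)).card := by
  apply Finset.card_bij (fun (ω : Fin (2 * n) ≃ Fin n × Bool) _ => ⇑ω)
  · intro ω hω
    simp only [Finset.mem_filter, Finset.mem_univ, true_and] at hω
    simp only [A, Finset.mem_filter, Finset.mem_univ, true_and]
    refine ⟨ω.injective, fun p hp => ?_⟩
    rw [← hω]
    rw [Rset, Finset.mem_filter, Finset.mem_range]
    exact ⟨fun h => h.2, fun h => ⟨hp, h⟩⟩
  · intro ω₁ _ ω₂ _ h
    exact Equiv.coe_fn_injective h
  · intro f hf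
    simp only [A, Finset.mem_filter, Finset.mem_univ, true_and] at hf
    obtain ⟨hinj, hcondf⟩ := hf
    have hb : Function.Bijective f := by
      rw [Fintype.bijective_iff_injective_and_card]
      refine ⟨hinj, ?_⟩
      simp only [Fintype.card_fin, Fintype.card_prod, Fintype.card_bool]
      omega
    refine ⟨Equiv.ofBijective f hb, ?_, rfl⟩
    simp only [Finset.mem_filter, Finset.mem_univ, true_and]
    have hco : ⇑(Equiv.ofBijective f hb) = f := rfl
    rw [hco]
    ext p
    rw [Rset, Finset.mem_filter, Finset.mem_range]
    constructor
    · rintro ⟨h1, h2⟩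
      exact (hcondf p h1).2 h2
    · intro hp
      have hlt : p < 2 * n := by
        have := S_subset_range hn hpos hcond hlast hp
        exact Finset.mem_range.1 this
      exact ⟨hlt, (hcondf p hlt).1 hp⟩

include hn hpos hcond hlast in
lemma final_count :
    (univ.filter fun ω : Fin (2 * n) ≃ Fin n × Bool =>
        ∀ j, 1 ≤ j → j ≤ n → Kseq (sockPath n ⇑ω) j = (k j : ℤ)).card
      = 2 ^ n * n.factorial * ∏ i ∈ Icc 1 n, k i := by
  have hfilter : (univ.filter fun ω : Fin (2 * n) ≃ Fin n × Bool =>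
      ∀ j, 1 ≤ j → j ≤ n → Kseq (sockPath n ⇑ω) j = (k j : ℤ))
      = (univ.filter fun ω : Fin (2 * n) ≃ Fin n × Bool =>
        Rset ⇑ω = (Icc 1 n).image (D k)) := by
    ext ω
    simp only [Finset.mem_filter, Finset.mem_univ, true_and]
    exact Kseq_iff hn hpos hcond hlast ω
  rw [hfilter, card_equiv_filter hn hpos hcond hlast]
  have hmain := card_A_factorial n ((Icc 1 n).image (D k)) (2 * n)
    (S_valid hn hpos hcond hlast) (2 * n) le_rfl
  rw [uS_full hn hpos hcond hlast] at hmain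
  simp only [Nat.sub_self, Nat.factorial_zero, mul_one] at hmain
  rw [hmain, prod_S hn hpos hcond hlast]

end Final

end SockAux

open Classical in
/-- Under the uniform measure on the `(2n)!` orderings of the `2n` socks, if the
positive integer tuple `(k 1, …, k n)` satisfies `k (i+1) ≥ k i - 1` for `1 ≤ i < n`
and `k n = 1`, then the probability that `K_j(x(ω)) = k j` for all `j = 1, …, n` is
`2^n · n! · (∏ k i) / (2n)!`. -/
theorem stmt_0 (n : ℕ) (hn : 1 ≤ n) (k : ℕ → ℕ)
    (hpos : ∀ i, 1 ≤ i → i ≤ n → 0 < k i)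
    (hcond : ∀ i, 1 ≤ i → i < n → k i ≤ k (i + 1) + 1)
    (hlast : k n = 1) :
    ((Finset.univ.filter fun ω : Fin (2 * n) ≃ Fin n × Bool =>
          ∀ j, 1 ≤ j → j ≤ n → Kseq (sockPath n ⇑ω) j = (k j : ℤ)).card : ℚ) /
        (Nat.factorial (2 * n) : ℚ) =
      (2 ^ n * (Nat.factorial n : ℚ) * ∏ i ∈ Finset.Icc 1 n, (k i : ℚ)) /
        (Nat.factorial (2 * n) : ℚ) := by
  have hcount := SockAux.final_count hn hpos hcond hlast
  rw [hcount]
  push_cast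
  ring
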